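/- (No critical point in the disk forces inseparable reduction.) Let k be an algebraically closed field that is complete with respect to a nontrivial non-Archimedean absolute value |·|. Let m ≥ 1 and s ≥ 0 be integers with m + s ≥ 2, and let f, g ∈ k[X] be polynomials all of whose coefficients have absolute value ≤ 1, satisfying: |f.coeff i| < 1 for all i < m + s and |f.coeff (m+s)| = 1; |g.coeff j| < 1 for all j < s and |g.coeff s| = 1. If the Wronskian W = f'·g − f·g' has no root x ∈ k with |x| < 1, then the image of m in k has absolute value < 1 (so the residue characteristic p satisfies 0 < p and p divides m, whence p ≤ m + s), and every coefficient of W has absolute value < 1 (i.e., the reduction of the Wronskian is the zero polynomial). -/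

import Mathlib

open Polynomial

open Polynomial

section Aux
variable {k : Type*} [NontriviallyNormedField k] [IsUltrametricDist k]

lemma Aux.norm_sub_le_max' (x y : k) : ‖x - y‖ ≤ max ‖x‖ ‖y‖ := by
  rw [sub_eq_add_neg]
  simpa using IsUltrametricDist.norm_add_le_max x (-y)

lemma Aux.norm_mul3_lt {x y z : k} (hx : ‖x‖ ≤ 1) (hy : ‖y‖ ≤ 1) (hz : ‖z‖ ≤ 1)
    (h : ‖x‖ < 1 ∨ ‖z‖ < 1) : ‖x * y * z‖ < 1 := by
  rw [norm_mul, norm_mul]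
  rcases h with h | h
  · refine lt_of_le_of_lt ?_ h
    exact (mul_le_of_le_one_right (mul_nonneg (norm_nonneg x) (norm_nonneg y)) hz).trans
      (mul_le_of_le_one_right (norm_nonneg x) hy)
  · refine lt_of_le_of_lt ?_ h
    have h1 : ‖x‖ * ‖y‖ ≤ 1 := mul_le_one₀ hx (norm_nonneg y) hy
    exact mul_le_of_le_one_left (norm_nonneg z) h1

lemma Aux.norm_multiset_sum_le (t : Multiset k) {C : ℝ} (hC : 0 ≤ C)
    (h : ∀ x ∈ t, ‖x‖ ≤ C) : ‖t.sum‖ ≤ C := by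
  induction t using Multiset.induction with
  | empty => simpa using hC
  | cons a t ih =>
    rw [Multiset.sum_cons]
    refine (IsUltrametricDist.norm_add_le_max _ _).trans (max_le ?_ ?_)
    · exact h a (Multiset.mem_cons_self a t)
    · exact ih fun x hx => h x (Multiset.mem_cons_of_mem hx)

lemma Aux.norm_finset_sum_lt {ι : Type*} (t : Finset ι) (F : ι → k)
    (h : ∀ p ∈ t, ‖F p‖ < 1) : ‖∑ p ∈ t, F p‖ < 1 := by
  classical
  induction t using Finset.induction with
  | empty => simpa using one_pos
  | insert _ _ ha ih =>
    rename_i a t'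
    rw [Finset.sum_insert ha]
    refine lt_of_le_of_lt (IsUltrametricDist.norm_add_le_max _ _) (max_lt ?_ ?_)
    · exact h a (Finset.mem_insert_self a t')
    · exact ih fun x hx => h x (Finset.mem_insert_of_mem hx)

lemma Aux.norm_multiset_prod (t : Multiset k) :
    ‖t.prod‖ = (t.map (fun x => ‖x‖)).prod := by
  induction t using Multiset.induction with
  | empty => simp
  | cons a t ih => simp [norm_mul, ih]

lemma Aux.norm_esymm_le (R : Multiset k) (hR : ∀ r ∈ R, 1 ≤ ‖r‖) (j : ℕ) :
    ‖R.esymm j‖ ≤ (R.map (fun x => ‖x‖)).prod := by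
  have hnn : ∀ (u : Multiset k), (0:ℝ) ≤ (u.map (fun x => ‖x‖)).prod := by
    intro u
    refine Multiset.prod_nonneg ?_
    intro a ha
    obtain ⟨r, -, rfl⟩ := Multiset.mem_map.mp ha
    exact norm_nonneg r
  rw [show R.esymm j = ((R.powersetCard j).map Multiset.prod).sum from rfl]
  refine Aux.norm_multiset_sum_le _ (hnn R) ?_
  intro x hx
  obtain ⟨t, ht, rfl⟩ := Multiset.mem_map.mp hx
  obtain ⟨hle, -⟩ := (Multiset.mem_powersetCard).mp ht
  obtain ⟨u, rfl⟩ := Multiset.le_iff_exists_add.mp hle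
  rw [Aux.norm_multiset_prod, Multiset.map_add, Multiset.prod_add]
  refine le_mul_of_one_le_right (hnn t) ?_
  refine Multiset.one_le_prod ?_
  intro a ha
  obtain ⟨r, hr, rfl⟩ := Multiset.mem_map.mp ha
  exact hR r (by simp [hr])

end Aux

section Aux2
variable {k : Type*} [NontriviallyNormedField k] [IsUltrametricDist k] [IsAlgClosed k]

lemma Aux.coeff_norm_le_coeff_zero (W : k[X])
    (hroots : ∀ r ∈ W.roots, 1 ≤ ‖r‖) (i : ℕ) : ‖W.coeff i‖ ≤ ‖W.coeff 0‖ := by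
  have hcard : Multiset.card W.roots = W.natDegree :=
    Polynomial.splits_iff_card_roots.mp (IsAlgClosed.splits W)
  have h0 : ‖W.coeff 0‖ = ‖W.leadingCoeff‖ * (W.roots.map (fun x => ‖x‖)).prod := by
    conv_lhs => rw [Polynomial.coeff_zero_eq_eval_zero,
      ← Polynomial.C_leadingCoeff_mul_prod_multiset_X_sub_C hcard]
    rw [Polynomial.eval_mul, Polynomial.eval_C, Polynomial.eval_multiset_prod, norm_mul,
      Multiset.map_map, Aux.norm_multiset_prod, Multiset.map_map]
    have : Multiset.map (fun x => ‖Polynomial.eval 0 (X - Polynomial.C x)‖) W.roots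
        = Multiset.map (fun x => ‖x‖) W.roots := by
      apply Multiset.map_congr rfl
      intro r _
      simp
    rw [Function.comp_def, Function.comp_def]
    rw [this]
  by_cases hi : i ≤ W.natDegree
  · rw [Polynomial.coeff_eq_esymm_roots_of_card hcard hi, h0]
    rw [norm_mul, norm_mul, norm_pow, norm_neg, norm_one, one_pow, mul_one]
    exact mul_le_mul_of_nonneg_left (Aux.norm_esymm_le _ hroots _) (norm_nonneg _)
  · rw [Polynomial.coeff_eq_zero_of_natDegree_lt (lt_of_not_ge hi)]
    simpa using norm_nonneg _

end Aux2

/-- No critical point in the disk forces inseparable reduction.  Under the normalization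
hypotheses expressing that `φ = f/g` fixes the Gauss point with directional multiplicity `m`
and surplus multiplicity `s` (with `m + s ≥ 2`, i.e. `φ` not injective on the open unit
disk), if the Wronskian `W = f'·g − f·g'` has no root `x` with `|x| < 1`, then `|m| < 1`
in `k` (so the residue characteristic is positive and divides `m`) and every coefficient of
`W` has absolute value `< 1` (the reduction of the Wronskian vanishes, i.e. `φ` has
inseparable reduction at the Gauss point). -/
theorem no_critical_point_inseparable_reduction {k : Type*} [NontriviallyNormedField k]
    [IsAlgClosed k] [CompleteSpace k] [IsUltrametricDist k]
    (m s : ℕ) (hm : 1 ≤ m) (hms : 2 ≤ m + s) (f g : k[X])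
    (hf1 : ∀ i, ‖f.coeff i‖ ≤ 1) (hg1 : ∀ j, ‖g.coeff j‖ ≤ 1)
    (hfsmall : ∀ i < m + s, ‖f.coeff i‖ < 1) (hftop : ‖f.coeff (m + s)‖ = 1)
    (hgsmall : ∀ j < s, ‖g.coeff j‖ < 1) (hgtop : ‖g.coeff s‖ = 1)
    (hnoroot : ∀ x : k, ‖x‖ < 1 → ¬(derivative f * g - f * derivative g).IsRoot x) :
    ‖(m : k)‖ < 1 ∧ ∀ i, ‖(derivative f * g - f * derivative g).coeff i‖ < 1 := by
  classical
  set W : k[X] := derivative f * g - f * derivative g with hWdef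
  have castle : ∀ n : ℕ, ‖((n : ℕ) : k)‖ ≤ 1 := fun n =>
    IsUltrametricDist.norm_natCast_le_one k n
  have castle' : ∀ n : ℕ, ‖((n : k) + 1)‖ ≤ 1 := by
    intro n
    have : ((n : k) + 1) = ((n + 1 : ℕ) : k) := by push_cast; ring
    rw [this]; exact castle _
  have hroots : ∀ r ∈ W.roots, 1 ≤ ‖r‖ := by
    intro r hr
    by_contra h
    exact hnoroot r (lt_of_not_ge h) (Polynomial.isRoot_of_mem_roots hr)
  have hWc : ∀ i, W.coeff i =
      (∑ p ∈ Finset.HasAntidiagonal.antidiagonal i, f.coeff (p.1 + 1) * ((p.1 : k) + 1) * g.coeff p.2)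
      - (∑ p ∈ Finset.HasAntidiagonal.antidiagonal i, f.coeff p.1 * (g.coeff (p.2 + 1) * ((p.2 : k) + 1))) := by
    intro i
    rw [hWdef, Polynomial.coeff_sub, Polynomial.coeff_mul, Polynomial.coeff_mul]
    congr 1
    · exact Finset.sum_congr rfl fun p _ => by rw [Polynomial.coeff_derivative]
    · exact Finset.sum_congr rfl fun p _ => by rw [Polynomial.coeff_derivative]
  have hc0 : ‖W.coeff 0‖ < 1 := by
    rw [hWc 0]
    refine lt_of_le_of_lt (Aux.norm_sub_le_max' _ _) (max_lt ?_ ?_)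
    · apply Aux.norm_finset_sum_lt
      intro p hp
      rw [Finset.HasAntidiagonal.mem_antidiagonal] at hp
      refine Aux.norm_mul3_lt (hf1 _) (castle' _) (hg1 _) (Or.inl (hfsmall _ ?_))
      omega
    · apply Aux.norm_finset_sum_lt
      intro p hp
      rw [Finset.HasAntidiagonal.mem_antidiagonal] at hp
      have hrw : f.coeff p.1 * (g.coeff (p.2 + 1) * ((p.2 : k) + 1))
          = f.coeff p.1 * ((p.2 : k) + 1) * g.coeff (p.2 + 1) := by ring
      rw [hrw]
      refine Aux.norm_mul3_lt (hf1 _) (castle' _) (hg1 _) (Or.inl (hfsmall _ ?_))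
      omega
  have part2 : ∀ i, ‖W.coeff i‖ < 1 := fun i =>
    lt_of_le_of_lt (Aux.coeff_norm_le_coeff_zero W hroots i) hc0
  refine ⟨?_, part2⟩
  set N := m + 2 * s - 1 with hN
  set FG := f.coeff (m + s) * g.coeff s with hFG
  have hA : ‖(∑ p ∈ Finset.HasAntidiagonal.antidiagonal N, f.coeff (p.1 + 1) * ((p.1 : k) + 1) * g.coeff p.2)
      - ((m + s : ℕ) : k) * FG‖ < 1 := by
    have hq : ((m + s - 1 : ℕ), s) ∈ Finset.HasAntidiagonal.antidiagonal N := by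
      rw [Finset.HasAntidiagonal.mem_antidiagonal]
      omega
    rw [← Finset.add_sum_erase _ _ hq]
    have hqt : f.coeff (((m + s - 1 : ℕ), s).1 + 1) * (((((m + s - 1 : ℕ), s).1 : ℕ) : k) + 1)
        * g.coeff ((m + s - 1 : ℕ), s).2 = ((m + s : ℕ) : k) * FG := by
      simp only []
      have h1 : (m + s - 1) + 1 = m + s := by omega
      have h2 : ((m + s - 1 : ℕ) : k) + 1 = ((m + s : ℕ) : k) := by
        rw [← Nat.cast_succ]
        exact congrArg (Nat.cast : ℕ → k) (by omega)
      rw [h1, h2, hFG]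
      ring
    rw [hqt, add_sub_cancel_left]
    apply Aux.norm_finset_sum_lt
    intro p hp
    obtain ⟨hne, hp⟩ := Finset.mem_erase.mp hp
    rw [Finset.HasAntidiagonal.mem_antidiagonal] at hp
    have key : p.1 + 1 < m + s ∨ p.2 < s := by
      rcases p with ⟨p1, p2⟩
      have hne' : ¬(p1 = m + s - 1 ∧ p2 = s) := fun h => hne (by rw [h.1, h.2])
      omega
    refine Aux.norm_mul3_lt (hf1 _) (castle' _) (hg1 _) ?_
    rcases key with key | key
    · exact Or.inl (hfsmall _ key)
    · exact Or.inr (hgsmall _ key)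
  have hB : ‖(∑ p ∈ Finset.HasAntidiagonal.antidiagonal N, f.coeff p.1 * (g.coeff (p.2 + 1) * ((p.2 : k) + 1)))
      - ((s : ℕ) : k) * FG‖ < 1 := by
    have hrw : ∀ p : ℕ × ℕ, f.coeff p.1 * (g.coeff (p.2 + 1) * ((p.2 : k) + 1))
        = f.coeff p.1 * ((p.2 : k) + 1) * g.coeff (p.2 + 1) := fun p => by ring
    rcases Nat.eq_zero_or_pos s with hs | hs
    · subst hs
      simp only [Nat.cast_zero, zero_mul, sub_zero]
      apply Aux.norm_finset_sum_lt
      intro p hp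
      rw [Finset.HasAntidiagonal.mem_antidiagonal] at hp
      rw [hrw]
      refine Aux.norm_mul3_lt (hf1 _) (castle' _) (hg1 _) (Or.inl (hfsmall _ ?_))
      omega
    · have hq : ((m + s : ℕ), (s - 1 : ℕ)) ∈ Finset.HasAntidiagonal.antidiagonal N := by
        rw [Finset.HasAntidiagonal.mem_antidiagonal]
        omega
      rw [← Finset.add_sum_erase _ _ hq]
      have hqt : f.coeff ((m + s : ℕ), (s - 1 : ℕ)).1
          * (g.coeff (((m + s : ℕ), (s - 1 : ℕ)).2 + 1)
            * (((((m + s : ℕ), (s - 1 : ℕ)).2 : ℕ) : k) + 1)) = ((s : ℕ) : k) * FG := by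
        simp only []
        have h1 : (s - 1) + 1 = s := by omega
        have h2 : ((s - 1 : ℕ) : k) + 1 = ((s : ℕ) : k) := by
          rw [← Nat.cast_succ]; exact congrArg (Nat.cast : ℕ → k) (by omega)
        rw [h1, h2, hFG]
        ring
      rw [hqt, add_sub_cancel_left]
      apply Aux.norm_finset_sum_lt
      intro p hp
      obtain ⟨hne, hp⟩ := Finset.mem_erase.mp hp
      rw [Finset.HasAntidiagonal.mem_antidiagonal] at hp
      have key : p.1 < m + s ∨ p.2 + 1 < s := by
        rcases p with ⟨p1, p2⟩
        have hne' : ¬(p1 = m + s ∧ p2 = s - 1) := fun h => hne (by rw [h.1, h.2])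
        omega
      rw [hrw]
      refine Aux.norm_mul3_lt (hf1 _) (castle' _) (hg1 _) ?_
      rcases key with key | key
      · exact Or.inl (hfsmall _ key)
      · exact Or.inr (hgsmall _ key)
  have hcN : W.coeff N - (m : k) * FG
      = ((∑ p ∈ Finset.HasAntidiagonal.antidiagonal N, f.coeff (p.1 + 1) * ((p.1 : k) + 1) * g.coeff p.2)
          - ((m + s : ℕ) : k) * FG)
        - ((∑ p ∈ Finset.HasAntidiagonal.antidiagonal N, f.coeff p.1 * (g.coeff (p.2 + 1) * ((p.2 : k) + 1)))
          - ((s : ℕ) : k) * FG) := by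
    rw [hWc N]
    push_cast
    ring
  have hWT : ‖W.coeff N - (m : k) * FG‖ < 1 := by
    rw [hcN]
    exact lt_of_le_of_lt (Aux.norm_sub_le_max' _ _) (max_lt hA hB)
  have hTn : ‖(m : k) * FG‖ = ‖(m : k)‖ := by
    rw [hFG, norm_mul, norm_mul, hftop, hgtop]
    ring
  calc ‖(m : k)‖ = ‖(m : k) * FG‖ := hTn.symm
    _ = ‖W.coeff N - (W.coeff N - (m : k) * FG)‖ := by rw [sub_sub_cancel]
    _ ≤ max ‖W.coeff N‖ ‖W.coeff N - (m : k) * FG‖ := Aux.norm_sub_le_max' _ _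
    _ < 1 := max_lt (part2 N) hWT
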